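/- Let A be a self-adjoint operator on a Hilbert space H with A ≥ 1 and let H^γ carry the norm ‖x‖_γ = ‖A^γ x‖. For f ∈ C([0,T], H) define (Nf)(t) = ∫₀^t e^{−A(t−s)} f(s) ds. Then for every ε ∈ [0,1) and γ > ε there is a constant C such that for all f with sup_{t∈(0,T]} t^{γ−ε}‖f(t)‖_{γ−ε} + sup_{t∈[0,T]} ‖f(t)‖ < ∞, one has sup_{t∈(0,T]} t^{γ}‖(Nf)(t)‖_{γ} + sup_{t∈[0,T]} ‖(Nf)(t)‖ ≤ C·T·( sup_{t∈(0,T]} t^{γ−ε}‖f(t)‖_{γ−ε} + sup_{t∈[0,T]} ‖f(t)‖ ). -/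

import Mathlib

set_option maxHeartbeats 1000000

open MeasureTheory intervalIntegral Finset

lemma cs_int {α β : ℝ} (h : α ≤ β) {u v : ℝ → ℝ} (hu : Continuous u) (hv : Continuous v) :
    (∫ x in α..β, u x * v x) ^ 2 ≤ (∫ x in α..β, u x ^ 2) * (∫ x in α..β, v x ^ 2) := by
  set A := ∫ x in α..β, u x ^ 2 with hA
  set B := ∫ x in α..β, v x ^ 2 with hB
  set I := ∫ x in α..β, u x * v x with hI
  have key : ∀ lam : ℝ, 0 ≤ B * lam ^ 2 + (2 * I) * lam + A := by
    intro lam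
    have h0 : 0 ≤ ∫ x in α..β, (lam * v x + u x) ^ 2 :=
      intervalIntegral.integral_nonneg h (fun x _ => sq_nonneg _)
    have e1 : (fun x => (lam * v x + u x) ^ 2)
        = fun x => lam ^ 2 * v x ^ 2 + (2 * lam) * (u x * v x) + u x ^ 2 := by
      funext x; ring
    have i1 : IntervalIntegrable (fun x => lam ^ 2 * v x ^ 2) volume α β :=
      (Continuous.intervalIntegrable (by continuity) _ _)
    have i2 : IntervalIntegrable (fun x => (2 * lam) * (u x * v x)) volume α β :=
      (Continuous.intervalIntegrable (by continuity) _ _)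
    have i3 : IntervalIntegrable (fun x => u x ^ 2) volume α β :=
      (Continuous.intervalIntegrable (by continuity) _ _)
    rw [e1, intervalIntegral.integral_add (i1.add i2) i3,
      intervalIntegral.integral_add i1 i2, intervalIntegral.integral_const_mul,
      intervalIntegral.integral_const_mul] at h0
    calc (0:ℝ) ≤ lam ^ 2 * B + 2 * lam * I + A := h0
    _ = B * lam ^ 2 + (2 * I) * lam + A := by ring
  have hd := discrim_le_zero (a := B) (b := 2 * I) (c := A)
    (fun x => by have := key x; nlinarith)
  rw [discrim] at hd
  nlinarith

lemma cs_w {α β : ℝ} (h : α ≤ β) {φ g : ℝ → ℝ} (hφ : Continuous φ) (hφ0 : ∀ x, 0 ≤ φ x)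
    (hg : Continuous g) :
    (∫ x in α..β, φ x * g x) ^ 2 ≤ (∫ x in α..β, φ x) * (∫ x in α..β, φ x * g x ^ 2) := by
  have hsq : Continuous fun x => Real.sqrt (φ x) := Real.continuous_sqrt.comp hφ
  have h1 := cs_int h hsq (v := fun x => Real.sqrt (φ x) * g x) (hsq.mul hg)
  have e1 : (∫ x in α..β, Real.sqrt (φ x) * (Real.sqrt (φ x) * g x)) = ∫ x in α..β, φ x * g x :=
    intervalIntegral.integral_congr (fun x _ => by
      rw [← mul_assoc, Real.mul_self_sqrt (hφ0 x)])
  have e2 : (∫ x in α..β, Real.sqrt (φ x) ^ 2) = ∫ x in α..β, φ x :=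
    intervalIntegral.integral_congr (fun x _ => Real.sq_sqrt (hφ0 x))
  have e3 : (∫ x in α..β, (Real.sqrt (φ x) * g x) ^ 2) = ∫ x in α..β, φ x * g x ^ 2 :=
    intervalIntegral.integral_congr (fun x _ => by
      rw [mul_pow, Real.sq_sqrt (hφ0 x)])
  rw [e1, e2, e3] at h1
  exact h1

lemma pow_exp_le {r : ℝ} (hr : 0 ≤ r) {x : ℝ} (hx : 0 ≤ x) :
    x ^ r * Real.exp (-x) ≤ (Nat.ceil r).factorial := by
  have hfac : (1:ℝ) ≤ (Nat.ceil r).factorial := by exact_mod_cast Nat.one_le_iff_ne_zero.2 (Nat.factorial_ne_zero _)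
  rcases le_or_gt x 1 with hx1 | hx1
  · have h1 : x ^ r ≤ 1 := Real.rpow_le_one hx hx1 hr
    have h2 : Real.exp (-x) ≤ 1 := Real.exp_le_one_iff.2 (by linarith)
    nlinarith [Real.exp_pos (-x), Real.rpow_nonneg hx r]
  · set n := Nat.ceil r
    have h1 : x ^ r ≤ x ^ (n:ℝ) := Real.rpow_le_rpow_of_exponent_le hx1.le (Nat.le_ceil r)
    rw [Real.rpow_natCast] at h1
    have h2 : x ^ n / n.factorial ≤ Real.exp x := Real.pow_div_factorial_le_exp x hx n
    have h3 : x ^ n ≤ (n.factorial : ℝ) * Real.exp x := by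
      have : (0:ℝ) < n.factorial := by positivity
      rw [div_le_iff₀ this] at h2; linarith [h2]
    have hep := Real.exp_pos x
    have : x ^ r * Real.exp (-x) ≤ x ^ n * Real.exp (-x) := by
      apply mul_le_mul_of_nonneg_right h1 (Real.exp_pos _).le
    rw [Real.exp_neg] at this ⊢
    calc x ^ r * (Real.exp x)⁻¹ ≤ x ^ n * (Real.exp x)⁻¹ := this
    _ ≤ ((n.factorial : ℝ) * Real.exp x) * (Real.exp x)⁻¹ := by
        apply mul_le_mul_of_nonneg_right h3 (by positivity)
    _ = (n.factorial : ℝ) := by field_simp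

lemma ker_bound {r : ℝ} (hr : 0 ≤ r) {A u : ℝ} (hA : 0 ≤ A) (hu : 0 < u) :
    A ^ r * Real.exp (-(A * u)) ≤ (Nat.ceil r).factorial * u ^ (-r) := by
  have h1 : (A * u) ^ r * Real.exp (-(A * u)) ≤ (Nat.ceil r).factorial :=
    pow_exp_le hr (mul_nonneg hA hu.le)
  have hAr : A ^ r = (A * u) ^ r * u ^ (-r) := by
    rw [Real.mul_rpow hA hu.le, mul_assoc, ← Real.rpow_add hu]
    simp
  calc A ^ r * Real.exp (-(A * u)) = ((A * u) ^ r * Real.exp (-(A * u))) * u ^ (-r) := by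
        rw [hAr]; ring
  _ ≤ (Nat.ceil r).factorial * u ^ (-r) :=
      mul_le_mul_of_nonneg_right h1 (Real.rpow_nonneg hu.le _)

lemma sq_add_le_two_sq (x y : ℝ) : (x + y) ^ 2 ≤ 2 * x ^ 2 + 2 * y ^ 2 := by
  nlinarith [sq_nonneg (x - y)]

lemma sq_of_sqrt_le {X M : ℝ} (hX : 0 ≤ X) (h : Real.sqrt X ≤ M) : X ≤ M ^ 2 := by
  nlinarith [Real.sq_sqrt hX, Real.sqrt_nonneg X]

/-- Regularization lemma for the semigroup convolution
`(Nf)(t) = ∫₀ᵗ e^{-A(t-s)} f(s) ds`, with `A` realized as a diagonal operator with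
eigenvalues `a i ≥ 1`: convolution gains `ε` powers of regularity, with
`‖Nf‖_{Y^γ_T} ≤ C T ‖f‖_{Y^{γ-ε}_T}` where
`‖y‖_{Y^γ_T} = sup_{t∈(0,T]} t^γ ‖y(t)‖_γ + sup_{t∈[0,T]} ‖y(t)‖`. -/
theorem stmt_9 (γ ε : ℝ) (hε0 : 0 ≤ ε) (hε1 : ε < 1) (hγ : ε < γ) :
    ∃ C : ℝ, 0 < C ∧ ∀ (T : ℝ), 0 < T → ∀ (a : ℕ → ℝ), (∀ i, 1 ≤ a i) →
      ∀ (f : ℝ → ℕ → ℝ), (∀ i, Continuous fun s => f s i) →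
      (∀ s ∈ Set.Icc (0 : ℝ) T, Summable fun i => (f s i) ^ 2) →
      (∀ s ∈ Set.Ioc (0 : ℝ) T, Summable fun i => ((a i) ^ (γ - ε) * f s i) ^ 2) →
      ∀ M : ℝ,
      (∀ s ∈ Set.Ioc (0 : ℝ) T,
        s ^ (γ - ε) * Real.sqrt (∑' i, ((a i) ^ (γ - ε) * f s i) ^ 2) ≤ M) →
      (∀ s ∈ Set.Icc (0 : ℝ) T, Real.sqrt (∑' i, (f s i) ^ 2) ≤ M) →
      (∀ t ∈ Set.Ioc (0 : ℝ) T,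
        t ^ γ * Real.sqrt (∑' i,
          ((a i) ^ γ * ∫ s in (0 : ℝ)..t, Real.exp (-(a i) * (t - s)) * f s i) ^ 2)
          ≤ C * T * M) ∧
      (∀ t ∈ Set.Icc (0 : ℝ) T,
        Real.sqrt (∑' i,
          (∫ s in (0 : ℝ)..t, Real.exp (-(a i) * (t - s)) * f s i) ^ 2)
          ≤ C * T * M) := by
  set Cγ : ℝ := ((Nat.ceil γ).factorial : ℝ) with hCγ
  set Cε : ℝ := ((Nat.ceil ε).factorial : ℝ) with hCε
  set δ : ℝ := (1 - ε)⁻¹ with hδ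
  set Q : ℝ := 2 * ((2:ℝ) ^ γ) ^ 2 * (Cγ ^ 2 + (Cε * δ) ^ 2) with hQ
  have hQ0 : 0 ≤ Q := by
    have : (0:ℝ) < (2:ℝ) ^ γ := Real.rpow_pos_of_pos (by norm_num) _
    positivity
  refine ⟨Real.sqrt Q + 1, by positivity, ?_⟩
  intro T hT a ha f hf hS1 hS2 M hM1 hM2
  have hM0 : 0 ≤ M := le_trans (Real.sqrt_nonneg _) (hM2 0 ⟨le_refl 0, hT.le⟩)
  have hker : ∀ i (t : ℝ), Continuous fun s => Real.exp (-(a i) * (t - s)) := by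
    intro i t; continuity
  have ha0 : ∀ i, (0:ℝ) < a i := fun i => lt_of_lt_of_le one_pos (ha i)
  constructor
  · -- part 1
    intro t ht
    obtain ⟨ht0, htT⟩ := ht
    set τ : ℝ := t / 2 with hτdef
    have hτ0 : 0 < τ := by positivity
    have hτt : τ ≤ t := by rw [hτdef]; linarith
    have ht2 : t = 2 * τ := by rw [hτdef]; ring
    have hγ0 : (0:ℝ) < γ := lt_of_le_of_lt hε0 hγ
    have hγε : (0:ℝ) ≤ γ - ε := by linarith
    have hδ0 : (0:ℝ) < δ := by rw [hδ]; exact inv_pos.2 (by linarith)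
    have hCγ0 : (0:ℝ) ≤ Cγ := by rw [hCγ]; positivity
    have hCε0 : (0:ℝ) ≤ Cε := by rw [hCε]; positivity
    have hX0 : (0:ℝ) < τ ^ γ := Real.rpow_pos_of_pos hτ0 γ
    have hZ0 : (0:ℝ) < τ ^ (γ - ε) := Real.rpow_pos_of_pos hτ0 (γ - ε)
    have hY0 : (0:ℝ) < τ ^ (1 - ε) := Real.rpow_pos_of_pos hτ0 (1 - ε)
    set DA : ℝ := Cγ / τ ^ γ with hDA
    have hDA0 : 0 ≤ DA := by rw [hDA]; positivity
    set JB : ℝ := δ * τ ^ (1 - ε) with hJB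
    have hJB0 : 0 ≤ JB := by rw [hJB]; positivity
    set W : ℝ := M ^ 2 / (τ ^ (γ - ε)) ^ 2 with hW
    have hW0 : 0 ≤ W := by rw [hW]; positivity
    set K : ℕ → ℝ := fun i => ∫ s in (0:ℝ)..τ, Real.exp (-(a i) * (t - s)) * f s i with hK
    set H : ℕ → ℝ := fun i => ∫ s in τ..t, Real.exp (-(a i) * (t - s)) * f s i with hH
    have hsplit : ∀ i, (∫ s in (0:ℝ)..t, Real.exp (-(a i) * (t - s)) * f s i) = K i + H i :=
      fun i => (intervalIntegral.integral_add_adjacent_intervals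
        (((hker i t).mul (hf i)).intervalIntegrable _ _)
        (((hker i t).mul (hf i)).intervalIntegrable _ _)).symm
    -- the rpow kernel integral
    have hrint : IntervalIntegrable (fun σ => (t - σ) ^ (-ε)) volume τ t := by
      have h0 : IntervalIntegrable (fun u : ℝ => u ^ (-ε)) volume (t - τ) (t - t) :=
        intervalIntegral.intervalIntegrable_rpow' (by linarith)
      simpa using h0.comp_sub_left t
    have hJint : (∫ σ in τ..t, (t - σ) ^ (-ε)) = JB := by
      rw [intervalIntegral.integral_comp_sub_left (fun u : ℝ => u ^ (-ε)) t]
      have h1 : t - t = 0 := by ring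
      have h2 : t - τ = τ := by rw [ht2]; ring
      rw [h1, h2, integral_rpow (Or.inl (by linarith : (-1:ℝ) < -ε))]
      rw [Real.zero_rpow (by linarith : -ε + 1 ≠ 0)]
      rw [hJB, hδ, show -ε + 1 = 1 - ε by ring]
      field_simp
      rw [sub_zero]
    -- ae inequalities tooling
    have hne : ∀ᵐ σ : ℝ, σ ≠ t := by
      rw [MeasureTheory.ae_iff]
      have : {σ : ℝ | ¬ σ ≠ t} = {t} := by ext x; simp
      rw [this]
      exact Real.volume_singleton
    -- kernel bounds
    have hkerA : ∀ i, ∀ σ ∈ Set.Icc (0:ℝ) τ,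
        (a i) ^ γ * Real.exp (-(a i) * (t - σ)) ≤ DA := by
      intro i σ hσ
      have hu : 0 < t - σ := by
        rw [ht2]; have := hσ.2; linarith
      have h1 : (a i) ^ γ * Real.exp (-((a i) * (t - σ))) ≤ Cγ * (t - σ) ^ (-γ) := by
        rw [hCγ]; exact ker_bound hγ0.le (ha0 i).le hu
      rw [neg_mul]
      have h2 : (t - σ) ^ (-γ) ≤ (τ ^ γ)⁻¹ := by
        rw [Real.rpow_neg hu.le]
        have h3 : τ ^ γ ≤ (t - σ) ^ γ :=
          Real.rpow_le_rpow hτ0.le (by rw [ht2]; have := hσ.2; linarith) hγ0.le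
        gcongr
      calc (a i) ^ γ * Real.exp (-((a i) * (t - σ))) ≤ Cγ * (t - σ) ^ (-γ) := h1
        _ ≤ Cγ * (τ ^ γ)⁻¹ := mul_le_mul_of_nonneg_left h2 hCγ0
        _ = DA := by rw [hDA, div_eq_mul_inv]
    have hkerB : ∀ i, ∀ σ, σ < t →
        (a i) ^ ε * Real.exp (-(a i) * (t - σ)) ≤ Cε * (t - σ) ^ (-ε) := by
      intro i σ hσ
      have hu : 0 < t - σ := by linarith
      rw [neg_mul, hCε]
      exact ker_bound hε0 (ha0 i).le hu
    -- sums of g² bound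
    have hgsum : ∀ (u : Finset ℕ), ∀ σ ∈ Set.Icc τ t, σ ≠ t →
        ∑ i ∈ u, ((a i) ^ (γ - ε) * f σ i) ^ 2 ≤ W := by
      intro u σ hσ _
      have hσ0 : 0 < σ := lt_of_lt_of_le hτ0 hσ.1
      have hσT : σ ≤ T := hσ.2.trans htT
      have hp : (0:ℝ) < σ ^ (γ - ε) := Real.rpow_pos_of_pos hσ0 _
      have h1 := hM1 σ ⟨hσ0, hσT⟩
      have h2 : Real.sqrt (∑' i, ((a i) ^ (γ - ε) * f σ i) ^ 2) ≤ M / σ ^ (γ - ε) := by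
        rw [le_div_iff₀ hp]; linarith [h1]
      have h3 : (∑' i, ((a i) ^ (γ - ε) * f σ i) ^ 2) ≤ (M / σ ^ (γ - ε)) ^ 2 :=
        sq_of_sqrt_le (tsum_nonneg fun i => sq_nonneg _) h2
      have h4 : (M / σ ^ (γ - ε)) ^ 2 ≤ W := by
        rw [hW, div_pow]
        have h5 : τ ^ (γ - ε) ≤ σ ^ (γ - ε) := Real.rpow_le_rpow hτ0.le hσ.1 hγε
        gcongr
      calc ∑ i ∈ u, ((a i) ^ (γ - ε) * f σ i) ^ 2
          ≤ ∑' i, ((a i) ^ (γ - ε) * f σ i) ^ 2 :=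
            Summable.sum_le_tsum u (fun i _ => sq_nonneg _) (hS2 σ ⟨hσ0, hσT⟩)
        _ ≤ (M / σ ^ (γ - ε)) ^ 2 := h3
        _ ≤ W := h4
    -- piece A bound
    have hA : ∀ u : Finset ℕ, ∑ i ∈ u, ((a i) ^ γ * K i) ^ 2 ≤ (DA * τ) * (τ * (DA * M ^ 2)) := by
      intro u
      have hφc : ∀ i, Continuous fun s => (a i) ^ γ * Real.exp (-(a i) * (t - s)) :=
        fun i => continuous_const.mul (hker i t)
      have hφ0 : ∀ i s, 0 ≤ (a i) ^ γ * Real.exp (-(a i) * (t - s)) :=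
        fun i s => mul_nonneg (Real.rpow_nonneg (ha0 i).le _) (Real.exp_pos _).le
      have hKrw : ∀ i, (a i) ^ γ * K i
          = ∫ s in (0:ℝ)..τ, ((a i) ^ γ * Real.exp (-(a i) * (t - s))) * f s i := by
        intro i
        rw [hK, ← intervalIntegral.integral_const_mul]
        exact intervalIntegral.integral_congr fun s _ => by ring
      have hf2nn : ∀ i, 0 ≤ ∫ s in (0:ℝ)..τ,
          ((a i) ^ γ * Real.exp (-(a i) * (t - s))) * f s i ^ 2 :=
        fun i => intervalIntegral.integral_nonneg hτ0.le fun s _ =>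
          mul_nonneg (hφ0 i s) (sq_nonneg _)
      have hfac1 : ∀ i, (∫ s in (0:ℝ)..τ, (a i) ^ γ * Real.exp (-(a i) * (t - s))) ≤ DA * τ := by
        intro i
        calc (∫ s in (0:ℝ)..τ, (a i) ^ γ * Real.exp (-(a i) * (t - s)))
            ≤ ∫ _ in (0:ℝ)..τ, DA :=
              intervalIntegral.integral_mono_on hτ0.le
                ((hφc i).intervalIntegrable _ _) intervalIntegrable_const
                (fun σ hσ => hkerA i σ hσ)
          _ = DA * τ := by
              rw [intervalIntegral.integral_const, smul_eq_mul, sub_zero, mul_comm]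
      have step : ∑ i ∈ u, ((a i) ^ γ * K i) ^ 2
          ≤ (DA * τ) * ∑ i ∈ u, ∫ s in (0:ℝ)..τ,
              ((a i) ^ γ * Real.exp (-(a i) * (t - s))) * f s i ^ 2 := by
        rw [Finset.mul_sum]
        apply Finset.sum_le_sum
        intro i _
        rw [hKrw i]
        calc (∫ s in (0:ℝ)..τ, ((a i) ^ γ * Real.exp (-(a i) * (t - s))) * f s i) ^ 2
            ≤ (∫ s in (0:ℝ)..τ, (a i) ^ γ * Real.exp (-(a i) * (t - s)))
              * ∫ s in (0:ℝ)..τ, ((a i) ^ γ * Real.exp (-(a i) * (t - s))) * f s i ^ 2 :=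
              cs_w hτ0.le (hφc i) (hφ0 i) (hf i)
          _ ≤ (DA * τ) * ∫ s in (0:ℝ)..τ,
                ((a i) ^ γ * Real.exp (-(a i) * (t - s))) * f s i ^ 2 :=
              mul_le_mul_of_nonneg_right (hfac1 i) (hf2nn i)
      have swap : ∑ i ∈ u, ∫ s in (0:ℝ)..τ, ((a i) ^ γ * Real.exp (-(a i) * (t - s))) * f s i ^ 2
          = ∫ s in (0:ℝ)..τ, ∑ i ∈ u, ((a i) ^ γ * Real.exp (-(a i) * (t - s))) * f s i ^ 2 :=
        (intervalIntegral.integral_finset_sum (fun i _ =>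
          ((hφc i).mul ((hf i).pow 2)).intervalIntegrable _ _)).symm
      have bound : (∫ s in (0:ℝ)..τ, ∑ i ∈ u, ((a i) ^ γ * Real.exp (-(a i) * (t - s))) * f s i ^ 2)
          ≤ τ * (DA * M ^ 2) := by
        calc (∫ s in (0:ℝ)..τ, ∑ i ∈ u, ((a i) ^ γ * Real.exp (-(a i) * (t - s))) * f s i ^ 2)
            ≤ ∫ _ in (0:ℝ)..τ, DA * M ^ 2 := by
              apply intervalIntegral.integral_mono_on hτ0.le
                (Continuous.intervalIntegrable
                  (continuous_finset_sum u fun i _ => (hφc i).mul ((hf i).pow 2)) _ _)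
                intervalIntegrable_const
              intro σ hσ
              have hστ : σ ∈ Set.Icc (0:ℝ) T := ⟨hσ.1, le_trans hσ.2 (hτt.trans htT)⟩
              calc ∑ i ∈ u, ((a i) ^ γ * Real.exp (-(a i) * (t - σ))) * f σ i ^ 2
                  ≤ ∑ i ∈ u, DA * f σ i ^ 2 := Finset.sum_le_sum fun i _ =>
                    mul_le_mul_of_nonneg_right (hkerA i σ hσ) (sq_nonneg _)
                _ = DA * ∑ i ∈ u, f σ i ^ 2 := by rw [Finset.mul_sum]
                _ ≤ DA * M ^ 2 := by
                    apply mul_le_mul_of_nonneg_left _ hDA0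
                    calc ∑ i ∈ u, f σ i ^ 2 ≤ ∑' i, f σ i ^ 2 :=
                        Summable.sum_le_tsum u (fun i _ => sq_nonneg _) (hS1 σ hστ)
                      _ ≤ M ^ 2 := sq_of_sqrt_le (tsum_nonneg fun i => sq_nonneg _) (hM2 σ hστ)
          _ = τ * (DA * M ^ 2) := by
              rw [intervalIntegral.integral_const, smul_eq_mul, sub_zero]
      calc ∑ i ∈ u, ((a i) ^ γ * K i) ^ 2
          ≤ (DA * τ) * ∑ i ∈ u, ∫ s in (0:ℝ)..τ,
              ((a i) ^ γ * Real.exp (-(a i) * (t - s))) * f s i ^ 2 := step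
        _ = (DA * τ) * ∫ s in (0:ℝ)..τ, ∑ i ∈ u,
              ((a i) ^ γ * Real.exp (-(a i) * (t - s))) * f s i ^ 2 := by rw [swap]
        _ ≤ (DA * τ) * (τ * (DA * M ^ 2)) :=
            mul_le_mul_of_nonneg_left bound (mul_nonneg hDA0 hτ0.le)
    -- piece B bound
    have hB : ∀ u : Finset ℕ, ∑ i ∈ u, ((a i) ^ γ * H i) ^ 2
        ≤ (Cε * JB) * ((Cε * W) * JB) := by
      intro u
      have hφc : ∀ i, Continuous fun s => (a i) ^ ε * Real.exp (-(a i) * (t - s)) :=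
        fun i => continuous_const.mul (hker i t)
      have hφ0 : ∀ i s, 0 ≤ (a i) ^ ε * Real.exp (-(a i) * (t - s)) :=
        fun i s => mul_nonneg (Real.rpow_nonneg (ha0 i).le _) (Real.exp_pos _).le
      have hgc : ∀ i, Continuous fun s => (a i) ^ (γ - ε) * f s i :=
        fun i => continuous_const.mul (hf i)
      have hHrw : ∀ i, (a i) ^ γ * H i
          = ∫ s in τ..t, ((a i) ^ ε * Real.exp (-(a i) * (t - s)))
              * ((a i) ^ (γ - ε) * f s i) := by
        intro i
        have hpow : (a i) ^ γ = (a i) ^ ε * (a i) ^ (γ - ε) := by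
          rw [← Real.rpow_add (ha0 i), show ε + (γ - ε) = γ by ring]
        rw [hH, ← intervalIntegral.integral_const_mul]
        exact intervalIntegral.integral_congr fun s _ => by rw [hpow]; ring
      have hf2nn : ∀ i, 0 ≤ ∫ s in τ..t,
          ((a i) ^ ε * Real.exp (-(a i) * (t - s))) * ((a i) ^ (γ - ε) * f s i) ^ 2 :=
        fun i => intervalIntegral.integral_nonneg hτt fun s _ =>
          mul_nonneg (hφ0 i s) (sq_nonneg _)
      have hfac1 : ∀ i, (∫ s in τ..t, (a i) ^ ε * Real.exp (-(a i) * (t - s))) ≤ Cε * JB := by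
        intro i
        calc (∫ s in τ..t, (a i) ^ ε * Real.exp (-(a i) * (t - s)))
            ≤ ∫ σ in τ..t, Cε * (t - σ) ^ (-ε) := by
              apply intervalIntegral.integral_mono_ae_restrict hτt
                ((hφc i).intervalIntegrable _ _) (hrint.const_mul Cε)
              filter_upwards [MeasureTheory.ae_restrict_mem measurableSet_Icc,
                MeasureTheory.ae_restrict_of_ae hne] with σ hσ hσne
              exact hkerB i σ (lt_of_le_of_ne hσ.2 hσne)
          _ = Cε * JB := by rw [intervalIntegral.integral_const_mul, hJint]
      have step : ∑ i ∈ u, ((a i) ^ γ * H i) ^ 2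
          ≤ (Cε * JB) * ∑ i ∈ u, ∫ s in τ..t,
              ((a i) ^ ε * Real.exp (-(a i) * (t - s))) * ((a i) ^ (γ - ε) * f s i) ^ 2 := by
        rw [Finset.mul_sum]
        apply Finset.sum_le_sum
        intro i _
        rw [hHrw i]
        calc (∫ s in τ..t, ((a i) ^ ε * Real.exp (-(a i) * (t - s)))
                * ((a i) ^ (γ - ε) * f s i)) ^ 2
            ≤ (∫ s in τ..t, (a i) ^ ε * Real.exp (-(a i) * (t - s)))
              * ∫ s in τ..t, ((a i) ^ ε * Real.exp (-(a i) * (t - s)))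
                  * ((a i) ^ (γ - ε) * f s i) ^ 2 :=
              cs_w hτt (hφc i) (hφ0 i) (hgc i)
          _ ≤ (Cε * JB) * ∫ s in τ..t, ((a i) ^ ε * Real.exp (-(a i) * (t - s)))
                  * ((a i) ^ (γ - ε) * f s i) ^ 2 :=
              mul_le_mul_of_nonneg_right (hfac1 i) (hf2nn i)
      have swap : ∑ i ∈ u, ∫ s in τ..t,
            ((a i) ^ ε * Real.exp (-(a i) * (t - s))) * ((a i) ^ (γ - ε) * f s i) ^ 2
          = ∫ s in τ..t, ∑ i ∈ u,
            ((a i) ^ ε * Real.exp (-(a i) * (t - s))) * ((a i) ^ (γ - ε) * f s i) ^ 2 :=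
        (intervalIntegral.integral_finset_sum (fun i _ =>
          ((hφc i).mul ((hgc i).pow 2)).intervalIntegrable _ _)).symm
      have bound : (∫ s in τ..t, ∑ i ∈ u,
            ((a i) ^ ε * Real.exp (-(a i) * (t - s))) * ((a i) ^ (γ - ε) * f s i) ^ 2)
          ≤ (Cε * W) * JB := by
        calc (∫ s in τ..t, ∑ i ∈ u,
              ((a i) ^ ε * Real.exp (-(a i) * (t - s))) * ((a i) ^ (γ - ε) * f s i) ^ 2)
            ≤ ∫ σ in τ..t, (Cε * W) * (t - σ) ^ (-ε) := by
              apply intervalIntegral.integral_mono_ae_restrict hτt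
                (Continuous.intervalIntegrable
                  (continuous_finset_sum u fun i _ => (hφc i).mul ((hgc i).pow 2)) _ _)
                (hrint.const_mul _)
              filter_upwards [MeasureTheory.ae_restrict_mem measurableSet_Icc,
                MeasureTheory.ae_restrict_of_ae hne] with σ hσ hσne
              have hσt : σ < t := lt_of_le_of_ne hσ.2 hσne
              have hrnn : (0:ℝ) ≤ (t - σ) ^ (-ε) := Real.rpow_nonneg (by linarith) _
              calc ∑ i ∈ u, ((a i) ^ ε * Real.exp (-(a i) * (t - σ)))
                    * ((a i) ^ (γ - ε) * f σ i) ^ 2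
                  ≤ ∑ i ∈ u, (Cε * (t - σ) ^ (-ε)) * ((a i) ^ (γ - ε) * f σ i) ^ 2 :=
                    Finset.sum_le_sum fun i _ =>
                      mul_le_mul_of_nonneg_right (hkerB i σ hσt) (sq_nonneg _)
                _ = (Cε * (t - σ) ^ (-ε)) * ∑ i ∈ u, ((a i) ^ (γ - ε) * f σ i) ^ 2 := by
                    rw [Finset.mul_sum]
                _ ≤ (Cε * (t - σ) ^ (-ε)) * W := by
                    apply mul_le_mul_of_nonneg_left (hgsum u σ hσ hσne)
                      (mul_nonneg hCε0 hrnn)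
                _ = (Cε * W) * (t - σ) ^ (-ε) := by ring
            _ = (Cε * W) * JB := by rw [intervalIntegral.integral_const_mul, hJint]
      calc ∑ i ∈ u, ((a i) ^ γ * H i) ^ 2
          ≤ (Cε * JB) * ∑ i ∈ u, ∫ s in τ..t,
              ((a i) ^ ε * Real.exp (-(a i) * (t - s))) * ((a i) ^ (γ - ε) * f s i) ^ 2 := step
        _ = (Cε * JB) * ∫ s in τ..t, ∑ i ∈ u,
              ((a i) ^ ε * Real.exp (-(a i) * (t - s))) * ((a i) ^ (γ - ε) * f s i) ^ 2 := by
            rw [swap]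
        _ ≤ (Cε * JB) * ((Cε * W) * JB) :=
            mul_le_mul_of_nonneg_left bound (mul_nonneg hCε0 hJB0)
    -- total tsum bound
    set SA : ℝ := (DA * τ) * (τ * (DA * M ^ 2)) with hSA
    set SB : ℝ := (Cε * JB) * ((Cε * W) * JB) with hSB
    have hSA0 : 0 ≤ SA := by
      rw [hSA]
      exact mul_nonneg (mul_nonneg hDA0 hτ0.le)
        (mul_nonneg hτ0.le (mul_nonneg hDA0 (sq_nonneg _)))
    have hSB0 : 0 ≤ SB := by
      rw [hSB]
      exact mul_nonneg (mul_nonneg hCε0 hJB0) (mul_nonneg (mul_nonneg hCε0 hW0) hJB0)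
    have key : ∑' i, ((a i) ^ γ * ∫ s in (0:ℝ)..t, Real.exp (-(a i) * (t - s)) * f s i) ^ 2
        ≤ 2 * SA + 2 * SB := by
      apply tsum_le_of_sum_le' (by linarith)
      intro u
      have h1 : ∀ i ∈ u, ((a i) ^ γ * ∫ s in (0:ℝ)..t, Real.exp (-(a i) * (t - s)) * f s i) ^ 2
          ≤ 2 * ((a i) ^ γ * K i) ^ 2 + 2 * ((a i) ^ γ * H i) ^ 2 := by
        intro i _
        rw [hsplit i, mul_add]
        exact sq_add_le_two_sq _ _
      calc ∑ i ∈ u, ((a i) ^ γ * ∫ s in (0:ℝ)..t, Real.exp (-(a i) * (t - s)) * f s i) ^ 2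
          ≤ ∑ i ∈ u, (2 * ((a i) ^ γ * K i) ^ 2 + 2 * ((a i) ^ γ * H i) ^ 2) :=
            Finset.sum_le_sum h1
        _ = 2 * ∑ i ∈ u, ((a i) ^ γ * K i) ^ 2 + 2 * ∑ i ∈ u, ((a i) ^ γ * H i) ^ 2 := by
            rw [Finset.sum_add_distrib, Finset.mul_sum, Finset.mul_sum]
        _ ≤ 2 * SA + 2 * SB :=
            add_le_add (mul_le_mul_of_nonneg_left (hA u) (by norm_num))
              (mul_le_mul_of_nonneg_left (hB u) (by norm_num))
    -- algebra
    have e2γ : t ^ γ = 2 ^ γ * τ ^ γ := by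
      rw [ht2, Real.mul_rpow (by norm_num) hτ0.le]
    have eYZ : τ ^ (1 - ε) / τ ^ (γ - ε) = τ / τ ^ γ := by
      rw [← Real.rpow_sub hτ0, show (1 - ε) - (γ - ε) = 1 - γ by ring,
        Real.rpow_sub hτ0, Real.rpow_one]
    have hXX : (τ ^ γ) ^ 2 * (τ ^ 2 / (τ ^ γ) ^ 2) = τ ^ 2 := by
      field_simp
    have h1 : (t ^ γ) ^ 2 * (2 * SA) = 2 * ((2:ℝ) ^ γ) ^ 2 * Cγ ^ 2 * (τ * M) ^ 2 := by
      calc (t ^ γ) ^ 2 * (2 * SA)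
          = 2 * ((2:ℝ) ^ γ) ^ 2 * Cγ ^ 2 * M ^ 2 * ((τ ^ γ) ^ 2 * (τ ^ 2 / (τ ^ γ) ^ 2)) := by
            rw [hSA, hDA, e2γ]; ring
        _ = 2 * ((2:ℝ) ^ γ) ^ 2 * Cγ ^ 2 * M ^ 2 * τ ^ 2 := by rw [hXX]
        _ = 2 * ((2:ℝ) ^ γ) ^ 2 * Cγ ^ 2 * (τ * M) ^ 2 := by ring
    have hXYZ : (τ ^ γ) ^ 2 * ((τ ^ (1 - ε)) ^ 2 / (τ ^ (γ - ε)) ^ 2) = τ ^ 2 := by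
      rw [← div_pow, eYZ, div_pow]
      exact hXX
    have h2 : (t ^ γ) ^ 2 * (2 * SB) = 2 * ((2:ℝ) ^ γ) ^ 2 * (Cε * δ) ^ 2 * (τ * M) ^ 2 := by
      calc (t ^ γ) ^ 2 * (2 * SB)
          = 2 * ((2:ℝ) ^ γ) ^ 2 * (Cε * δ) ^ 2 * M ^ 2
              * ((τ ^ γ) ^ 2 * ((τ ^ (1 - ε)) ^ 2 / (τ ^ (γ - ε)) ^ 2)) := by
            rw [hSB, hJB, hW, e2γ]; ring
        _ = 2 * ((2:ℝ) ^ γ) ^ 2 * (Cε * δ) ^ 2 * M ^ 2 * τ ^ 2 := by rw [hXYZ]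
        _ = 2 * ((2:ℝ) ^ γ) ^ 2 * (Cε * δ) ^ 2 * (τ * M) ^ 2 := by ring
    have hsum : (t ^ γ) ^ 2 * (2 * SA + 2 * SB) = Q * (τ * M) ^ 2 := by
      calc (t ^ γ) ^ 2 * (2 * SA + 2 * SB)
          = (t ^ γ) ^ 2 * (2 * SA) + (t ^ γ) ^ 2 * (2 * SB) := by ring
        _ = 2 * ((2:ℝ) ^ γ) ^ 2 * Cγ ^ 2 * (τ * M) ^ 2
            + 2 * ((2:ℝ) ^ γ) ^ 2 * (Cε * δ) ^ 2 * (τ * M) ^ 2 := by rw [h1, h2]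
        _ = Q * (τ * M) ^ 2 := by rw [hQ]; ring
    have halg : (t ^ γ) ^ 2 * (2 * SA + 2 * SB) ≤ Q * (t * M) ^ 2 := by
      rw [hsum]
      have hττ : (τ * M) ^ 2 ≤ (t * M) ^ 2 :=
        pow_le_pow_left₀ (mul_nonneg hτ0.le hM0) (mul_le_mul_of_nonneg_right hτt hM0) 2
      exact mul_le_mul_of_nonneg_left hττ hQ0
    calc t ^ γ * Real.sqrt (∑' i,
          ((a i) ^ γ * ∫ s in (0:ℝ)..t, Real.exp (-(a i) * (t - s)) * f s i) ^ 2)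
        = Real.sqrt ((t ^ γ) ^ 2 * ∑' i,
            ((a i) ^ γ * ∫ s in (0:ℝ)..t, Real.exp (-(a i) * (t - s)) * f s i) ^ 2) := by
          rw [Real.sqrt_mul (sq_nonneg _), Real.sqrt_sq (Real.rpow_nonneg ht0.le γ)]
      _ ≤ Real.sqrt (Q * (t * M) ^ 2) := by
          apply Real.sqrt_le_sqrt
          calc (t ^ γ) ^ 2 * ∑' i,
                ((a i) ^ γ * ∫ s in (0:ℝ)..t, Real.exp (-(a i) * (t - s)) * f s i) ^ 2
              ≤ (t ^ γ) ^ 2 * (2 * SA + 2 * SB) :=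
                mul_le_mul_of_nonneg_left key (sq_nonneg _)
            _ ≤ Q * (t * M) ^ 2 := halg
      _ = Real.sqrt Q * (t * M) := by
          rw [Real.sqrt_mul hQ0, Real.sqrt_sq (mul_nonneg ht0.le hM0)]
      _ ≤ Real.sqrt Q * (T * M) :=
          mul_le_mul_of_nonneg_left (mul_le_mul_of_nonneg_right htT hM0) (Real.sqrt_nonneg _)
      _ ≤ (Real.sqrt Q + 1) * (T * M) :=
          mul_le_mul_of_nonneg_right (le_add_of_nonneg_right zero_le_one)
            (mul_nonneg hT.le hM0)
      _ = (Real.sqrt Q + 1) * T * M := (mul_assoc _ _ _).symm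
  · -- part 2
    intro t ht
    obtain ⟨ht0, htT⟩ := ht
    have key : ∑' i, (∫ s in (0:ℝ)..t, Real.exp (-(a i) * (t - s)) * f s i) ^ 2
        ≤ (t * M) ^ 2 := by
      apply tsum_le_of_sum_le' (by positivity)
      intro u
      have hnn : ∀ i, 0 ≤ ∫ s in (0:ℝ)..t, Real.exp (-(a i) * (t - s)) * f s i ^ 2 :=
        fun i => intervalIntegral.integral_nonneg ht0 (fun x _ => by positivity)
      have hfac1 : ∀ i, (∫ s in (0:ℝ)..t, Real.exp (-(a i) * (t - s))) ≤ t := by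
        intro i
        calc (∫ s in (0:ℝ)..t, Real.exp (-(a i) * (t - s)))
            ≤ ∫ _ in (0:ℝ)..t, (1:ℝ) := by
              apply intervalIntegral.integral_mono_on ht0
                ((hker i t).intervalIntegrable _ _) intervalIntegrable_const
              intro x hx
              rw [Real.exp_le_one_iff]
              nlinarith [ha i, hx.1, hx.2]
          _ = t := by simp
      have step : ∑ i ∈ u, (∫ s in (0:ℝ)..t, Real.exp (-(a i) * (t - s)) * f s i) ^ 2
          ≤ ∑ i ∈ u, t * ∫ s in (0:ℝ)..t, Real.exp (-(a i) * (t - s)) * f s i ^ 2 := by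
        apply Finset.sum_le_sum
        intro i _
        calc (∫ s in (0:ℝ)..t, Real.exp (-(a i) * (t - s)) * f s i) ^ 2
            ≤ (∫ s in (0:ℝ)..t, Real.exp (-(a i) * (t - s)))
              * (∫ s in (0:ℝ)..t, Real.exp (-(a i) * (t - s)) * f s i ^ 2) :=
              cs_w ht0 (hker i t) (fun x => (Real.exp_pos _).le) (hf i)
          _ ≤ t * ∫ s in (0:ℝ)..t, Real.exp (-(a i) * (t - s)) * f s i ^ 2 :=
              mul_le_mul_of_nonneg_right (hfac1 i) (hnn i)
      have swap : ∑ i ∈ u, ∫ s in (0:ℝ)..t, Real.exp (-(a i) * (t - s)) * f s i ^ 2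
          = ∫ s in (0:ℝ)..t, ∑ i ∈ u, Real.exp (-(a i) * (t - s)) * f s i ^ 2 :=
        (intervalIntegral.integral_finset_sum (fun i _ =>
          ((hker i t).mul ((hf i).pow 2)).intervalIntegrable _ _)).symm
      have bound : (∫ s in (0:ℝ)..t, ∑ i ∈ u, Real.exp (-(a i) * (t - s)) * f s i ^ 2)
          ≤ t * M ^ 2 := by
        calc (∫ s in (0:ℝ)..t, ∑ i ∈ u, Real.exp (-(a i) * (t - s)) * f s i ^ 2)
            ≤ ∫ _ in (0:ℝ)..t, M ^ 2 := by
              apply intervalIntegral.integral_mono_on ht0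
                (Continuous.intervalIntegrable (continuous_finset_sum u fun i _ => ((hker i t).mul ((hf i).pow 2))) _ _) intervalIntegrable_const
              intro x hx
              calc ∑ i ∈ u, Real.exp (-(a i) * (t - x)) * f x i ^ 2
                  ≤ ∑ i ∈ u, f x i ^ 2 := by
                    apply Finset.sum_le_sum
                    intro i _
                    have h1 : Real.exp (-(a i) * (t - x)) ≤ 1 := by
                      rw [Real.exp_le_one_iff]
                      nlinarith [ha i, hx.1, hx.2]
                    nlinarith [sq_nonneg (f x i), Real.exp_pos (-(a i) * (t - x))]
                _ ≤ ∑' i, f x i ^ 2 :=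
                    Summable.sum_le_tsum u (fun i _ => sq_nonneg _)
                      (hS1 x ⟨hx.1, hx.2.trans htT⟩)
                _ ≤ M ^ 2 := sq_of_sqrt_le (tsum_nonneg (fun i => sq_nonneg _))
                      (hM2 x ⟨hx.1, hx.2.trans htT⟩)
          _ = t * M ^ 2 := by rw [intervalIntegral.integral_const, smul_eq_mul, sub_zero]
      calc ∑ i ∈ u, (∫ s in (0:ℝ)..t, Real.exp (-(a i) * (t - s)) * f s i) ^ 2
          ≤ ∑ i ∈ u, t * ∫ s in (0:ℝ)..t, Real.exp (-(a i) * (t - s)) * f s i ^ 2 := step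
        _ = t * ∑ i ∈ u, ∫ s in (0:ℝ)..t, Real.exp (-(a i) * (t - s)) * f s i ^ 2 := by
            rw [Finset.mul_sum]
        _ = t * ∫ s in (0:ℝ)..t, ∑ i ∈ u, Real.exp (-(a i) * (t - s)) * f s i ^ 2 := by
            rw [swap]
        _ ≤ t * (t * M ^ 2) := mul_le_mul_of_nonneg_left bound ht0
        _ = (t * M) ^ 2 := by ring
    calc Real.sqrt (∑' i, (∫ s in (0:ℝ)..t, Real.exp (-(a i) * (t - s)) * f s i) ^ 2)
        ≤ Real.sqrt ((t * M) ^ 2) := Real.sqrt_le_sqrt key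
      _ = t * M := Real.sqrt_sq (by positivity)
      _ ≤ T * M := mul_le_mul_of_nonneg_right htT hM0
      _ ≤ (Real.sqrt Q + 1) * (T * M) :=
          le_mul_of_one_le_left (mul_nonneg hT.le hM0)
            (by linarith [Real.sqrt_nonneg Q])
      _ = (Real.sqrt Q + 1) * T * M := (mul_assoc _ _ _).symm
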